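/- Let α: H¹(M,ℝ) → ℝ be a convex superlinear function (Mather's alpha function) on a finite-dimensional real vector space, and for c ∈ H¹(M,ℝ) let F(c) be the union of all flats of α containing c in their relative interior, where a flat is a closed convex set on which α is affine. Then F(c) is itself a flat of α. -/

import Mathlib

open Set

set_option maxHeartbeats 1000000

noncomputable section

variable {V : Type*} [NormedAddCommGroup V] [NormedSpace ℝ V]

/-- A flat of `α`: a closed convex set on which `α` is affine. -/
def IsFlat (α : V → ℝ) (K : Set V) : Prop :=
  IsClosed K ∧ Convex ℝ K ∧ ∃ (l : V →ₗ[ℝ] ℝ) (r : ℝ), ∀ x ∈ K, α x = l x + r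

/-- The direction space `VK = Vect(K - K)` of a convex set. -/
def flatSpan (K : Set V) : Submodule ℝ V :=
  Submodule.span ℝ { v : V | ∃ x ∈ K, ∃ y ∈ K, v = x - y }

/-- `c` lies in the relative interior of `K`: some neighborhood of `0` in
`VK` translated by `c` is contained in `K`. -/
def InRelInterior (c : V) (K : Set V) : Prop :=
  ∃ ε > 0, ∀ v ∈ (flatSpan K : Set V), ‖v‖ < ε → c + v ∈ K

/-- A convex function on a finite-dimensional space has a subgradient at every point. -/
lemma exists_subgradient_aux [FiniteDimensional ℝ V] (α : V → ℝ)
    (hconv : ConvexOn ℝ Set.univ α) (c : V) :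
    ∃ l : V →ₗ[ℝ] ℝ, ∀ x, α c + l (x - c) ≤ α x := by
  have hcont : Continuous α := hconv.locallyLipschitz.continuous
  set U : Set (V × ℝ) := {p | α p.1 < p.2} with hU
  have hUopen : IsOpen U := by
    have : U = {p : V × ℝ | α p.1 - p.2 < 0} := by ext p; simp [hU, sub_neg]
    rw [this]
    exact isOpen_lt ((hcont.comp continuous_fst).sub continuous_snd) continuous_const
  have hUconv : Convex ℝ U := by
    intro p hp q hq a b ha hb hab
    simp only [mem_setOf_eq, hU] at *
    have h := hconv.2 (mem_univ p.1) (mem_univ q.1) ha hb hab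
    rcases ha.eq_or_lt with rfl | ha'
    · obtain rfl : b = 1 := by linarith
      simpa using hq
    · have : a * α p.1 + b * α q.1 < a * p.2 + b * q.2 := by
        rcases hb.eq_or_lt with rfl | hb'
        · simp only [zero_mul, add_zero]
          exact mul_lt_mul_of_pos_left hp ha'
        · exact add_lt_add (mul_lt_mul_of_pos_left hp ha') (mul_lt_mul_of_pos_left hq hb')
      calc α (a • p.1 + b • q.1) ≤ a • α p.1 + b • α q.1 := h
        _ < (a • p + b • q).2 := by simpa [smul_eq_mul] using this
  have hnotin : ((c, α c) : V × ℝ) ∉ U := by simp [hU]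
  obtain ⟨f, hf⟩ := geometric_hahn_banach_open_point hUconv hUopen hnotin
  set g : V → ℝ := fun v => f (v, 0) with hg
  set a : ℝ := f (0, 1) with ha
  have hfsplit : ∀ (x : V) (t : ℝ), f (x, t) = g x + t * a := by
    intro x t
    have : (x, t) = (x, (0:ℝ)) + t • ((0:V), (1:ℝ)) := by simp
    rw [this, map_add, map_smul]
    simp [hg, ha, smul_eq_mul]
  have haneg : a < 0 := by
    have h1 := hf (c, α c + 1) (by simp [hU])
    rw [hfsplit, hfsplit] at h1
    nlinarith
  have hineq : ∀ x : V, g x + α x * a ≤ g c + α c * a := by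
    intro x
    by_contra h
    push_neg at h
    set δ := g x + α x * a - (g c + α c * a) with hδ
    have hδpos : 0 < δ := by linarith
    have hq2 : 0 < δ / (-2 * a) := div_pos hδpos (by linarith)
    have h2 := hf (x, α x + δ / (-2 * a)) (by simp only [hU, mem_setOf_eq]; linarith)
    rw [hfsplit, hfsplit] at h2
    have ha0 : a ≠ 0 := ne_of_lt haneg
    have : (α x + δ / (-2 * a)) * a = α x * a - δ / 2 := by
      field_simp
      ring
    rw [this] at h2
    linarith
  refine ⟨(-a)⁻¹ • ((f : V × ℝ →ₗ[ℝ] ℝ).comp (LinearMap.inl ℝ V ℝ)), fun x => ?_⟩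
  have h3 := hineq x
  have hna0 : 0 < -a := by linarith
  have hna : 0 < (-a)⁻¹ := inv_pos.2 hna0
  simp only [LinearMap.smul_apply, LinearMap.coe_comp, Function.comp_apply,
    LinearMap.inl_apply, smul_eq_mul]
  have hgl : (f : V × ℝ →ₗ[ℝ] ℝ) (x - c, 0) = g x - g c := by
    have : ((x - c, (0:ℝ)) : V × ℝ) = (x, 0) - (c, 0) := by simp
    rw [this, map_sub]; simp [hg]
  rw [hgl, ← sub_nonneg]
  have ha0 : a ≠ 0 := ne_of_lt haneg
  have key : α x - (α c + (-a)⁻¹ * (g x - g c)) =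
      (-a)⁻¹ * ((g c + α c * a) - (g x + α x * a)) := by
    field_simp [ha0]
    ring
  rw [key]
  exact mul_nonneg (le_of_lt hna) (by linarith)

/-- Elements of the sup of two submodules decompose with controlled norms. -/
lemma sup_decomp_aux [FiniteDimensional ℝ V] (p q : Submodule ℝ V) :
    ∃ C > 0, ∀ v ∈ p ⊔ q, ∃ a ∈ p, ∃ b ∈ q,
      v = a + b ∧ ‖a‖ ≤ C * ‖v‖ ∧ ‖b‖ ≤ C * ‖v‖ := by
  let f0 : (p × q) →ₗ[ℝ] V := (p.subtype).coprod q.subtype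
  have hrange : ∀ x : p × q, f0 x ∈ p ⊔ q := fun x =>
    Submodule.add_mem_sup x.1.2 x.2.2
  let f1 : (p × q) →ₗ[ℝ] ↥(p ⊔ q) := f0.codRestrict (p ⊔ q) hrange
  have hsurj : Function.Surjective f1 := by
    rintro ⟨v, hv⟩
    obtain ⟨a, ha, b, hb, rfl⟩ := Submodule.mem_sup.1 hv
    exact ⟨(⟨a, ha⟩, ⟨b, hb⟩), by ext; simp [f1, f0]⟩
  let f : (p × q) →L[ℝ] ↥(p ⊔ q) := f1.toContinuousLinearMap
  obtain ⟨C, hC, h⟩ := f.exists_preimage_norm_le hsurj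
  refine ⟨C, hC, fun v hv => ?_⟩
  obtain ⟨x, hx, hnorm⟩ := h ⟨v, hv⟩
  refine ⟨x.1, x.1.2, x.2, x.2.2, ?_, ?_, ?_⟩
  · have := congrArg Subtype.val hx
    simp only [f, f1, f0, LinearMap.coe_toContinuousLinearMap',
      LinearMap.codRestrict_apply, LinearMap.coprod_apply, Submodule.coe_subtype] at this
    exact this.symm
  · calc ‖(x.1 : V)‖ = ‖x.1‖ := rfl
      _ ≤ ‖x‖ := norm_fst_le x
      _ ≤ C * ‖(⟨v, hv⟩ : ↥(p ⊔ q))‖ := hnorm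
      _ = C * ‖v‖ := rfl
  · calc ‖(x.2 : V)‖ = ‖x.2‖ := rfl
      _ ≤ ‖x‖ := norm_snd_le x
      _ ≤ C * ‖(⟨v, hv⟩ : ↥(p ⊔ q))‖ := hnorm
      _ = C * ‖v‖ := rfl

/-- The affine slice `{z | z - c ∈ W}` is convex. -/
lemma convex_slice_aux (W : Submodule ℝ V) (c : V) : Convex ℝ {z : V | z - c ∈ W} := by
  intro x hx y hy a b ha hb hab
  simp only [mem_setOf_eq] at *
  have hc : a • c + b • c = c := by rw [← add_smul, hab, one_smul]
  have hrw : a • x + b • y - c = a • (x - c) + b • (y - c) := by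
    have h1 : a • (x - c) + b • (y - c) = a • x + b • y - (a • c + b • c) := by
      rw [smul_sub, smul_sub]; abel
    rw [h1, hc]
  rw [hrw]
  exact W.add_mem (W.smul_mem _ hx) (W.smul_mem _ hy)

lemma closed_slice_aux [FiniteDimensional ℝ V] (W : Submodule ℝ V) (c : V) :
    IsClosed {z : V | z - c ∈ W} := by
  have : {z : V | z - c ∈ W} = (fun z : V => z - c) ⁻¹' (W : Set V) := rfl
  rw [this]
  exact (Submodule.closed_of_finiteDimensional W).preimage (continuous_id.sub continuous_const)

lemma flatSpan_mono {K K' : Set V} (h : K ⊆ K') : flatSpan K ≤ flatSpan K' := by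
  apply Submodule.span_mono
  rintro v ⟨x, hx, y, hy, rfl⟩
  exact ⟨x, h hx, y, h hy, rfl⟩

/-- for a convex superlinear function `α` on a finite-dimensional
space, the union `F(c)` of all flats containing `c` in their relative interior
is itself a flat of `α`. -/
theorem union_of_flats_is_flat [FiniteDimensional ℝ V]
    (α : V → ℝ) (hconv : ConvexOn ℝ Set.univ α)
    (hsl : ∀ C : ℝ, ∃ R : ℝ, ∀ x : V, R ≤ ‖x‖ → C * ‖x‖ ≤ α x)
    (c : V) :
    IsFlat α (⋃₀ { K : Set V | IsFlat α K ∧ InRelInterior c K }) := by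
  classical
  obtain ⟨l, hl⟩ := exists_subgradient_aux α hconv c
  have hcont : Continuous α := hconv.locallyLipschitz.continuous
  set S : Set (Set V) := { K : Set V | IsFlat α K ∧ InRelInterior c K } with hSdef
  -- the singleton `{c}` belongs to the family
  have hsingleSpan : flatSpan ({c} : Set V) = ⊥ := by
    rw [flatSpan, Submodule.span_eq_bot]
    rintro v ⟨x, hx, y, hy, rfl⟩
    simp only [mem_singleton_iff] at hx hy
    rw [hx, hy, sub_self]
  have hsingle : ({c} : Set V) ∈ S := by
    constructor
    · exact ⟨isClosed_singleton, convex_singleton c, 0, α c, by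
        intro x hx; simp only [mem_singleton_iff] at hx; simp [hx]⟩
    · refine ⟨1, one_pos, fun v hv _ => ?_⟩
      rw [hsingleSpan] at hv
      simp only [Submodule.bot_coe, mem_singleton_iff] at hv
      simp [hv]
  -- `c` belongs to every member of the family
  have hcK : ∀ K ∈ S, c ∈ K := by
    intro K hK
    obtain ⟨ε, hε, hrel⟩ := hK.2
    have h0 : (0 : V) ∈ (flatSpan K : Set V) := Submodule.zero_mem _
    have := hrel 0 h0 (by simpa using hε)
    simpa using this
  have hcF : c ∈ ⋃₀ S := ⟨{c}, hsingle, rfl⟩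
  -- key fact: on every flat of the family, `α` is given by the subgradient
  have key : ∀ K ∈ S, ∀ x ∈ K, α x = α c + l (x - c) := by
    intro K hK x hx
    have hcK' : c ∈ K := hcK K hK
    obtain ⟨⟨hKcl, hKconv, lK, rK, hKaff⟩, ε, hε, hrel⟩ := hK
    rcases eq_or_ne x c with rfl | hxc
    · simp
    have hd : x - c ∈ flatSpan K := Submodule.subset_span ⟨x, hx, c, hcK', rfl⟩
    have hdn : 0 < ‖x - c‖ := by
      rw [norm_pos_iff]; exact sub_ne_zero.2 hxc
    set t : ℝ := ε / (2 * ‖x - c‖) with ht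
    have htpos : 0 < t := by positivity
    have hnorm : ‖(-t) • (x - c)‖ < ε := by
      rw [norm_smul, Real.norm_eq_abs, abs_neg, abs_of_pos htpos]
      have : t * ‖x - c‖ = ε / 2 := by
        rw [ht]; field_simp
      rw [this]; linarith
    have hy : c + (-t) • (x - c) ∈ K :=
      hrel _ (Submodule.smul_mem _ _ hd) hnorm
    set y := c + (-t) • (x - c) with hydef
    have hax : α x = α c + lK (x - c) := by
      have h1 := hKaff x hx
      have h2 := hKaff c hcK'
      have h3 : lK x = lK c + lK (x - c) := by rw [map_sub]; ring
      linarith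
    have hay : α y = α c - t * lK (x - c) := by
      have h1 := hKaff y hy
      have h2 := hKaff c hcK'
      have h3 : lK y = lK c + (-t) * lK (x - c) := by
        rw [hydef, map_add, map_smul, smul_eq_mul]
      linarith
    have hsx := hl x
    have hsy := hl y
    have hylc : l (y - c) = -t * l (x - c) := by
      have : y - c = (-t) • (x - c) := by rw [hydef]; abel
      rw [this, map_smul, smul_eq_mul]
    rw [hylc] at hsy
    have h5 : lK (x - c) ≤ l (x - c) :=
      le_of_mul_le_mul_left (by nlinarith) htpos
    have h6 : l (x - c) ≤ lK (x - c) := by linarith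
    rw [hax, le_antisymm h5 h6]
  set r : ℝ := α c - l c with hrdef
  have keyF : ∀ x ∈ ⋃₀ S, α x = l x + r := by
    rintro x ⟨K, hK, hx⟩
    rw [key K hK x hx, map_sub, hrdef]; ring
  -- the maximal flat `E`
  set E : Set V := {x : V | α x ≤ α c + l (x - c)} with hEdef
  have hEcl : IsClosed E := by
    apply isClosed_le hcont
    exact continuous_const.add
      ((l.continuous_of_finiteDimensional).comp (continuous_id.sub continuous_const))
  have hEconv : Convex ℝ E := by
    intro x hx y hy a b ha hb hab
    simp only [hEdef, mem_setOf_eq] at hx hy ⊢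
    obtain rfl : b = 1 - a := by linarith
    have hx' : α x ≤ α c + (l x - l c) := by rwa [map_sub] at hx
    have hy' : α y ≤ α c + (l y - l c) := by rwa [map_sub] at hy
    have hxa : a * α x ≤ a * (α c + (l x - l c)) := mul_le_mul_of_nonneg_left hx' ha
    have hyb : (1 - a) * α y ≤ (1 - a) * (α c + (l y - l c)) :=
      mul_le_mul_of_nonneg_left hy' hb
    have h1 := hconv.2 (mem_univ x) (mem_univ y) ha hb hab
    simp only [smul_eq_mul] at h1
    have hcomb : l (a • x + (1 - a) • y - c) = a * l x + (1 - a) * l y - l c := by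
      rw [map_sub, map_add, map_smul, map_smul]; simp [smul_eq_mul]
    rw [hcomb]
    linarith
  have hEaff : ∀ x ∈ E, α x = α c + l (x - c) := fun x hx => le_antisymm hx (hl x)
  have hKE : ∀ K ∈ S, K ⊆ E := fun K hK x hx => le_of_eq (key K hK x hx)
  -- pairwise directedness of the family
  have pair : ∀ K₁ ∈ S, ∀ K₂ ∈ S, ∃ K₃ ∈ S, K₁ ⊆ K₃ ∧ K₂ ⊆ K₃ := by
    intro K₁ hK₁ K₂ hK₂
    obtain ⟨ε₁, hε₁, hrel₁⟩ := hK₁.2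
    obtain ⟨ε₂, hε₂, hrel₂⟩ := hK₂.2
    obtain ⟨C, hC, hdec⟩ := sup_decomp_aux (flatSpan K₁) (flatSpan K₂)
    set K₃ := closure (convexHull ℝ (K₁ ∪ K₂)) with hK₃def
    have hsub1 : K₁ ⊆ K₃ := fun x hx =>
      subset_closure (subset_convexHull ℝ _ (Or.inl hx))
    have hsub2 : K₂ ⊆ K₃ := fun x hx =>
      subset_closure (subset_convexHull ℝ _ (Or.inr hx))
    have hKE3 : K₃ ⊆ E :=
      closure_minimal (convexHull_min (union_subset (hKE K₁ hK₁) (hKE K₂ hK₂)) hEconv) hEcl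
    have hflat3 : IsFlat α K₃ :=
      ⟨isClosed_closure, (convex_convexHull ℝ _).closure, l, r, fun x hx => by
        rw [hEaff x (hKE3 hx), map_sub, hrdef]; ring⟩
    set W := flatSpan K₁ ⊔ flatSpan K₂ with hWdef
    have hsubW : K₃ ⊆ {z : V | z - c ∈ W} := by
      apply closure_minimal _ (closed_slice_aux W c)
      apply convexHull_min _ (convex_slice_aux W c)
      rintro x (hx | hx)
      · show x - c ∈ W
        exact Submodule.mem_sup_left (Submodule.subset_span ⟨x, hx, c, hcK K₁ hK₁, rfl⟩)
      · show x - c ∈ W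
        exact Submodule.mem_sup_right (Submodule.subset_span ⟨x, hx, c, hcK K₂ hK₂, rfl⟩)
    have hspan3 : flatSpan K₃ ≤ W := by
      rw [flatSpan, Submodule.span_le]
      rintro v ⟨x, hx, y, hy, rfl⟩
      have h1 : x - c ∈ W := hsubW hx
      have h2 : y - c ∈ W := hsubW hy
      have h3 : x - y = (x - c) - (y - c) := by abel
      rw [h3]; exact W.sub_mem h1 h2
    refine ⟨K₃, ⟨hflat3, ?_⟩, hsub1, hsub2⟩
    refine ⟨min ε₁ ε₂ / (2 * C), by positivity, fun v hv hnv => ?_⟩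
    have hvW : v ∈ W := hspan3 hv
    obtain ⟨a, ha, b, hb, rfl, hna, hnb⟩ := hdec v hvW
    have hord : 2 * C * ‖a + b‖ < min ε₁ ε₂ := by
      have h := mul_lt_mul_of_pos_left hnv (by positivity : (0:ℝ) < 2 * C)
      calc 2 * C * ‖a + b‖ < 2 * C * (min ε₁ ε₂ / (2 * C)) := h
        _ = min ε₁ ε₂ := by field_simp
    have h1 : c + (2:ℝ) • a ∈ K₁ := by
      apply hrel₁ _ (Submodule.smul_mem _ _ ha)
      rw [norm_smul, Real.norm_eq_abs]
      have : |(2:ℝ)| = 2 := by norm_num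
      rw [this]
      have := min_le_left ε₁ ε₂
      linarith
    have h2 : c + (2:ℝ) • b ∈ K₂ := by
      apply hrel₂ _ (Submodule.smul_mem _ _ hb)
      rw [norm_smul, Real.norm_eq_abs]
      have : |(2:ℝ)| = 2 := by norm_num
      rw [this]
      have := min_le_right ε₁ ε₂
      linarith
    have hcombo : c + (a + b) =
        (1/2 : ℝ) • (c + (2:ℝ) • a) + (1/2 : ℝ) • (c + (2:ℝ) • b) := by
      module
    rw [hcombo]
    exact subset_closure ((convex_convexHull ℝ (K₁ ∪ K₂))
      (subset_convexHull ℝ _ (Or.inl h1)) (subset_convexHull ℝ _ (Or.inr h2))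
      (a := (1/2 : ℝ)) (b := (1/2 : ℝ)) (by norm_num) (by norm_num) (by norm_num))
  -- convexity of the union
  have hFconv : Convex ℝ (⋃₀ S) := by
    rintro x ⟨K₁, hK₁, hx⟩ y ⟨K₂, hK₂, hy⟩ a b ha hb hab
    obtain ⟨K₃, hK₃, h1, h2⟩ := pair K₁ hK₁ K₂ hK₂
    exact ⟨K₃, hK₃, hK₃.1.2.1 (h1 hx) (h2 hy) ha hb hab⟩
  -- a single flat whose span dominates finitely many difference vectors
  have finCover : ∀ s : Set V, s.Finite →
      s ⊆ {v : V | ∃ x ∈ ⋃₀ S, ∃ y ∈ ⋃₀ S, v = x - y} →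
      ∃ K ∈ S, s ⊆ (flatSpan K : Set V) := by
    intro s hs
    refine Set.Finite.induction_on (motive := fun s _ =>
      s ⊆ {v : V | ∃ x ∈ ⋃₀ S, ∃ y ∈ ⋃₀ S, v = x - y} →
      ∃ K ∈ S, s ⊆ (flatSpan K : Set V)) s hs (fun _ => ⟨{c}, hsingle, by simp⟩) ?_
    rintro w s' hws hs' IH hsub
    obtain ⟨K, hK, hsK⟩ := IH (subset_trans (subset_insert w s') hsub)
    obtain ⟨x, ⟨Kx, hKx, hxKx⟩, y, ⟨Ky, hKy, hyKy⟩, rfl⟩ := hsub (mem_insert w s')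
    obtain ⟨K', hK', hKK', hKxK'⟩ := pair K hK Kx hKx
    obtain ⟨K'', hK'', hK'K'', hKyK''⟩ := pair K' hK' Ky hKy
    refine ⟨K'', hK'', insert_subset ?_ ?_⟩
    · exact Submodule.subset_span
        ⟨x, hK'K'' (hKxK' hxKx), y, hKyK'' hyKy, rfl⟩
    · intro v hv
      exact flatSpan_mono (hKK'.trans hK'K'') (hsK hv)
  -- a master flat dominating the whole span of the union
  obtain ⟨bset, hbsub, hbspan, hbli⟩ :=
    exists_linearIndependent ℝ {v : V | ∃ x ∈ ⋃₀ S, ∃ y ∈ ⋃₀ S, v = x - y}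
  have hbfin : bset.Finite := hbli.setFinite
  obtain ⟨Km, hKm, hbKm⟩ := finCover bset hbfin hbsub
  have hspanF : flatSpan (⋃₀ S) ≤ flatSpan Km := by
    have h1 : flatSpan (⋃₀ S) = Submodule.span ℝ bset := by
      rw [flatSpan, ← hbspan]
    rw [h1, Submodule.span_le]
    exact hbKm
  obtain ⟨εm, hεm, hrelm⟩ := hKm.2
  -- the closure of the union belongs to the family
  have hFE : ⋃₀ S ⊆ E := fun x hx => by
    obtain ⟨K, hK, hxK⟩ := hx
    exact le_of_eq (key K hK x hxK)
  have hclosureS : closure (⋃₀ S) ∈ S := by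
    constructor
    · refine ⟨isClosed_closure, hFconv.closure, l, r, fun x hx => ?_⟩
      have hxE : x ∈ E := closure_minimal hFE hEcl hx
      rw [hEaff x hxE, map_sub, hrdef]; ring
    · refine ⟨εm, hεm, fun v hv hnv => ?_⟩
      have hsubF : closure (⋃₀ S) ⊆ {z : V | z - c ∈ flatSpan (⋃₀ S)} :=
        closure_minimal
          (fun x hx => Submodule.subset_span ⟨x, hx, c, hcF, rfl⟩)
          (closed_slice_aux _ c)
      have hle : flatSpan (closure (⋃₀ S)) ≤ flatSpan (⋃₀ S) := by
        rw [flatSpan, Submodule.span_le]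
        rintro w ⟨x, hx, y, hy, rfl⟩
        have h1 : x - c ∈ flatSpan (⋃₀ S) := hsubF hx
        have h2 : y - c ∈ flatSpan (⋃₀ S) := hsubF hy
        have h3 : x - y = (x - c) - (y - c) := by abel
        rw [h3]; exact Submodule.sub_mem _ h1 h2
      have hvK : v ∈ flatSpan Km := hspanF (hle hv)
      exact subset_closure ⟨Km, hKm, hrelm v hvK hnv⟩
  have hFclosed : IsClosed (⋃₀ S) :=
    isClosed_of_closure_subset (subset_sUnion_of_mem hclosureS)
  exact ⟨hFclosed, hFconv, l, r, keyF⟩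

end
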